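/- Let (Ω, ℳ, P) be a probability space with a filtration (𝓕_s)_{s≥0}, let Π be an n×n real matrix, and fix t ≥ 0, i ∈ {1,…,n}, constants pᵢ¹,…,pᵢⁿ ≥ 0 and delays dᵢ¹,…,dᵢⁿ ∈ [0,t]. Suppose that for every s ∈ [0,t], η(s) : Ω → ℝⁿ is 𝓕_s-measurable and almost surely equal to a canonical basis vector, x(s) : Ω → ℝⁿ is 𝓕_s-measurable, integrable, and componentwise nonnegative almost surely, and that for each j ∈ {1,…,n}, E[η(t) | 𝓕_{t−dᵢʲ}] = e^{Πᵀdᵢʲ} η(t−dᵢʲ) almost surely. Define (𝒫ᵢx)(t) ∈ ℝⁿ by its j-th component pᵢʲ x_j(t−dᵢʲ), define ζ(s) = E[η(s) ⊗ x(s)] ∈ ℝ^{n²}, and define the n×n² matrices f_{ij} = pᵢʲ ((U_{ji} e^{Πᵀdᵢʲ}) ⊗ u_jᵀ). Then E[ηᵢ(t)(𝒫ᵢx)(t)] = Σ_{j=1}^{n} f_{ij} ζ(t−dᵢʲ). -/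

import Mathlib

open MeasureTheory Matrix
open scoped Kronecker

noncomputable section

/-- The 1-norm `‖x‖₁ = ∑ i |x i|`. -/
def oneNorm {ι : Type*} [Fintype ι] (x : ι → ℝ) : ℝ := ∑ i, |x i|

/-- A square real matrix is Metzler if its off-diagonal entries are nonnegative. -/
def IsMetzler {ι : Type*} [Fintype ι] (A : Matrix ι ι ℝ) : Prop :=
  ∀ i j, i ≠ j → 0 ≤ A i j

/-- A square real matrix is Hurwitz stable if all of its (complex) eigenvalues have
negative real parts. -/
def IsHurwitz {ι : Type*} [Fintype ι] [DecidableEq ι] (A : Matrix ι ι ℝ) : Prop :=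
  ∀ z ∈ spectrum ℂ (A.map (Complex.ofReal)), z.re < 0

/-- The matrix exponential `e^A`. -/
def matExp {ι : Type*} [Fintype ι] [DecidableEq ι] (A : Matrix ι ι ℝ) : Matrix ι ι ℝ :=
  NormedSpace.exp A

/-- The `i`-th canonical basis vector of `ℝⁿ`. -/
def basisVec {n : ℕ} (i : Fin n) : Fin n → ℝ := fun k => if k = i then 1 else 0

/-- Kronecker product of two vectors: `(u ⊗ v)_{(i,j)} = uᵢ vⱼ`. -/
def vecKron {n : ℕ} (u v : Fin n → ℝ) : Fin n × Fin n → ℝ := fun p => u p.1 * v p.2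

/-- Kronecker product `M ⊗ vᵀ` of an `n×n` matrix with a row vector: an `n × n²` matrix. -/
def matKronRow {n : ℕ} (M : Matrix (Fin n) (Fin n) ℝ) (v : Fin n → ℝ) :
    Matrix (Fin n) (Fin n × Fin n) ℝ := Matrix.of fun k p => M k p.1 * v p.2

/-- Kronecker product `u ⊗ F` of a column vector with an `n × n²` matrix: an `n² × n²` matrix. -/
def vecKronMat {n : ℕ} (u : Fin n → ℝ) (F : Matrix (Fin n) (Fin n × Fin n) ℝ) :
    Matrix (Fin n × Fin n) (Fin n × Fin n) ℝ := Matrix.of fun q p => u q.1 * F q.2 p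

/-- Kronecker product `rᵀ ⊗ Iₙ` of a row vector with the identity: an `n × n²` matrix
with block structure `[r₁ Iₙ … rₙ Iₙ]`. -/
def rowKronId {n : ℕ} (r : Fin n → ℝ) : Matrix (Fin n) (Fin n × Fin n) ℝ :=
  Matrix.of fun k p => r p.1 * (if k = p.2 then 1 else 0)

/-- Block-diagonal matrix `⨁ᵢ Aᵢ`. -/
def blockDiag {n : ℕ} (A : Fin n → Matrix (Fin n) (Fin n) ℝ) :
    Matrix (Fin n × Fin n) (Fin n × Fin n) ℝ :=
  Matrix.of fun q p => if q.1 = p.1 then A q.1 q.2 p.2 else 0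

/-- A piecewise-constant switching signal: constant between consecutive members of an
unbounded increasing sequence of switching times starting at `0`. -/
def PiecewiseConstant {α : Type*} (σ : ℝ → α) : Prop :=
  ∃ u : ℕ → ℝ, StrictMono u ∧ u 0 = 0 ∧ Filter.Tendsto u Filter.atTop Filter.atTop ∧
    ∀ k : ℕ, ∀ t ∈ Set.Ico (u k) (u (k + 1)), σ t = σ (u k)

lemma condexp_apply_coord {n : ℕ} {Ω : Type*} {m : MeasurableSpace Ω}
    {mΩ : MeasurableSpace Ω} (hm : m ≤ mΩ) {μ : Measure Ω} [IsFiniteMeasure μ]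
    {f : Ω → Fin n → ℝ} (hf : Integrable f μ) (k : Fin n) :
    (fun ω => (μ[f|m]) ω k) =ᵐ[μ] μ[fun ω => f ω k | m] := by
  set L : ((Fin n) → ℝ) →L[ℝ] ℝ := ContinuousLinearMap.proj k with hL
  have hc : Integrable (μ[f|m]) μ := integrable_condExp
  have hfk : Integrable (fun ω => f ω k) μ := L.integrable_comp hf
  have hck : Integrable (fun ω => (μ[f|m]) ω k) μ := L.integrable_comp hc
  refine ae_eq_condExp_of_forall_setIntegral_eq hm hfk
    (fun s _ _ => hck.integrableOn) (fun s hs hμs => ?_) ?_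
  · have h1 : ∫ x in s, (μ[f|m]) x k ∂μ = L (∫ x in s, (μ[f|m]) x ∂μ) :=
      L.integral_comp_comm hc.integrableOn
    have h2 : ∫ x in s, f x k ∂μ = L (∫ x in s, f x ∂μ) :=
      L.integral_comp_comm hf.integrableOn
    rw [h1, h2, setIntegral_condExp hm hf hs]
  · exact ((continuous_apply k).comp_stronglyMeasurable
      (stronglyMeasurable_condExp (m := m) (f := f) (μ := μ))).aestronglyMeasurable

lemma integral_pi_eq {ι : Type*} [Fintype ι] [DecidableEq ι] {Ω : Type*}
    [MeasurableSpace Ω] (μ : Measure Ω) (F : Ω → ι → ℝ)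
    (hF : ∀ k, Integrable (fun ω => F ω k) μ) :
    (∫ ω, F ω ∂μ) = fun k => ∫ ω, F ω k ∂μ := by
  have h : (fun ω => F ω)
      = fun ω => ∑ j, (F ω j) • (fun k => if k = j then (1 : ℝ) else 0) := by
    funext ω k
    simp [Finset.sum_apply, mul_ite]
  rw [h, integral_finset_sum _ (fun j _ => (hF j).smul_const _)]
  funext k
  simp [integral_smul_const, Finset.sum_apply, mul_ite]

/-- `E[ηᵢ(t) (𝒫ᵢ x)(t)] = ∑ⱼ f_{ij} ζ(t − dᵢʲ)`, where
`f_{ij} = pᵢʲ ((U_{ji} e^{Πᵀ dᵢʲ}) ⊗ uⱼᵀ)` and `ζ(s) = E[η(s) ⊗ x(s)]`. -/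
theorem stmt6 (n : ℕ) {Ω : Type*} [mΩ : MeasurableSpace Ω]
    (μ : Measure Ω) [IsProbabilityMeasure μ]
    (𝓕 : Filtration ℝ mΩ)
    (Pi : Matrix (Fin n) (Fin n) ℝ)
    (t : ℝ) (ht : 0 ≤ t) (i : Fin n)
    (p : Fin n → ℝ) (hp : ∀ j, 0 ≤ p j)
    (d : Fin n → ℝ) (hd : ∀ j, d j ∈ Set.Icc (0 : ℝ) t)
    (η : ℝ → Ω → Fin n → ℝ) (x : ℝ → Ω → Fin n → ℝ)
    (hηmeas : ∀ s ∈ Set.Icc (0 : ℝ) t, Measurable[𝓕 s] (η s))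
    (hηbasis : ∀ s ∈ Set.Icc (0 : ℝ) t, ∀ᵐ ω ∂μ, ∃ a : Fin n, η s ω = basisVec a)
    (hxmeas : ∀ s ∈ Set.Icc (0 : ℝ) t, Measurable[𝓕 s] (x s))
    (hxint : ∀ s ∈ Set.Icc (0 : ℝ) t, Integrable (x s) μ)
    (hxnn : ∀ s ∈ Set.Icc (0 : ℝ) t, ∀ᵐ ω ∂μ, ∀ k, 0 ≤ x s ω k)
    (hcond : ∀ j : Fin n,
      μ[η t | 𝓕 (t - d j)] =ᵐ[μ]
        fun ω => (matExp (d j • Pi.transpose)).mulVec (η (t - d j) ω)) :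
    (∫ ω, η t ω i • (fun j => p j * x (t - d j) ω j) ∂μ) =
      ∑ j : Fin n,
        (p j • matKronRow (Matrix.single j i (1 : ℝ) * matExp (d j • Pi.transpose))
            (basisVec j)).mulVec
          (∫ ω, vecKron (η (t - d j) ω) (x (t - d j) ω) ∂μ) := by
  have htI : t ∈ Set.Icc (0 : ℝ) t := ⟨ht, le_rfl⟩
  have hst : ∀ j : Fin n, t - d j ∈ Set.Icc (0 : ℝ) t :=
    fun j => ⟨by linarith [(hd j).2], by linarith [(hd j).1]⟩
  -- ambient measurability
  have hηm : ∀ s ∈ Set.Icc (0 : ℝ) t, Measurable (η s) :=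
    fun s hs => (hηmeas s hs).mono (𝓕.le s) le_rfl
  have hxm : ∀ s ∈ Set.Icc (0 : ℝ) t, Measurable (x s) :=
    fun s hs => (hxmeas s hs).mono (𝓕.le s) le_rfl
  -- boundedness of η components
  have hηbd : ∀ s ∈ Set.Icc (0 : ℝ) t, ∀ a : Fin n, ∀ᵐ ω ∂μ, ‖η s ω a‖ ≤ 1 := by
    intro s hs a
    filter_upwards [hηbasis s hs] with ω hω
    obtain ⟨b, hb⟩ := hω
    rw [hb]
    simp only [basisVec, Real.norm_eq_abs]
    split <;> norm_num
  have hηnorm : ∀ᵐ ω ∂μ, ‖η t ω‖ ≤ 1 := by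
    filter_upwards [hηbasis t htI] with ω hω
    obtain ⟨b, hb⟩ := hω
    rw [hb, pi_norm_le_iff_of_nonneg zero_le_one]
    intro k
    simp only [basisVec, Real.norm_eq_abs]
    split <;> norm_num
  have hηtint : Integrable (η t) μ :=
    Integrable.mono' (integrable_const (1 : ℝ))
      (hηm t htI).aestronglyMeasurable hηnorm
  -- component integrability of x
  have hxik : ∀ s ∈ Set.Icc (0 : ℝ) t, ∀ b : Fin n,
      Integrable (fun ω => x s ω b) μ := fun s hs b =>
    (ContinuousLinearMap.proj (R := ℝ) (φ := fun _ : Fin n => ℝ) b).integrable_comp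
      (hxint s hs)
  -- products η_a * x_b integrable
  have hprod : ∀ s ∈ Set.Icc (0 : ℝ) t, ∀ s' ∈ Set.Icc (0 : ℝ) t, ∀ a b : Fin n,
      Integrable (fun ω => η s ω a * x s' ω b) μ := by
    intro s hs s' hs' a b
    exact Integrable.bdd_mul (hxik s' hs' b)
      ((measurable_pi_apply a).comp (hηm s hs)).aestronglyMeasurable (hηbd s hs a)
  -- the key coordinate identity
  have key : ∀ j : Fin n, ∫ ω, η t ω i * x (t - d j) ω j ∂μ
      = ∑ a : Fin n, matExp (d j • Pi.transpose) i a *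
          ∫ ω, η (t - d j) ω a * x (t - d j) ω j ∂μ := by
    intro j
    have hm : 𝓕 (t - d j) ≤ mΩ := 𝓕.le _
    set g : Ω → ℝ := fun ω => x (t - d j) ω j with hg
    set f : Ω → ℝ := fun ω => η t ω i with hf
    have hgm : StronglyMeasurable[𝓕 (t - d j)] g :=
      ((measurable_pi_apply j).comp (hxmeas _ (hst j))).stronglyMeasurable
    have hgint : Integrable g μ := hxik _ (hst j) j
    have hfint : Integrable f μ :=
      (ContinuousLinearMap.proj (R := ℝ) (φ := fun _ : Fin n => ℝ) i).integrable_comp hηtint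
    have hgf : Integrable (fun ω => g ω * f ω) μ := by
      have h := Integrable.bdd_mul (c := 1) hgint
        ((measurable_pi_apply i).comp (hηm t htI)).aestronglyMeasurable (hηbd t htI i)
      simpa [mul_comm] using h
    have hpull : μ[fun ω => g ω * f ω | 𝓕 (t - d j)] =ᵐ[μ]
        fun ω => g ω * (μ[f|𝓕 (t - d j)]) ω :=
      condExp_mul_of_stronglyMeasurable_left hgm hgf hfint
    have hcoord : (μ[f|𝓕 (t - d j)]) =ᵐ[μ]
        fun ω => (matExp (d j • Pi.transpose)).mulVec (η (t - d j) ω) i := by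
      have h1 := (condexp_apply_coord hm hηtint i).symm
      filter_upwards [h1, hcond j] with ω h1ω h2ω
      rw [h1ω, h2ω]
    calc ∫ ω, f ω * g ω ∂μ = ∫ ω, g ω * f ω ∂μ := by
          simp_rw [mul_comm]
      _ = ∫ ω, (μ[fun ω => g ω * f ω | 𝓕 (t - d j)]) ω ∂μ := (integral_condExp hm).symm
      _ = ∫ ω, g ω * ((matExp (d j • Pi.transpose)).mulVec (η (t - d j) ω) i) ∂μ := by
          refine integral_congr_ae ?_
          filter_upwards [hpull, hcoord] with ω h1ω h2ω
          rw [h1ω, h2ω]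
      _ = ∫ ω, ∑ a : Fin n, matExp (d j • Pi.transpose) i a *
            (η (t - d j) ω a * x (t - d j) ω j) ∂μ := by
          refine integral_congr_ae (Filter.Eventually.of_forall fun ω => ?_)
          simp only [Matrix.mulVec, dotProduct]
          rw [Finset.mul_sum]
          exact Finset.sum_congr rfl fun a _ => by ring
      _ = ∑ a : Fin n, matExp (d j • Pi.transpose) i a *
            ∫ ω, η (t - d j) ω a * x (t - d j) ω j ∂μ := by
          rw [integral_finset_sum]
          · exact Finset.sum_congr rfl fun a _ => integral_const_mul _ _
          · exact fun a _ => ((hprod _ (hst j) _ (hst j) a j)).const_mul _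
  -- now compute both sides componentwise
  have hζ : ∀ j : Fin n, (∫ ω, vecKron (η (t - d j) ω) (x (t - d j) ω) ∂μ)
      = fun q : Fin n × Fin n => ∫ ω, η (t - d j) ω q.1 * x (t - d j) ω q.2 ∂μ := by
    intro j
    exact integral_pi_eq μ _ (fun q => hprod _ (hst j) _ (hst j) q.1 q.2)
  have hLHS : (∫ ω, η t ω i • (fun j => p j * x (t - d j) ω j) ∂μ)
      = fun k => p k * ∫ ω, η t ω i * x (t - d k) ω k ∂μ := by
    rw [integral_pi_eq μ _ ?_]
    · funext k
      rw [← integral_const_mul]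
      refine integral_congr_ae (Filter.Eventually.of_forall fun ω => ?_)
      simp [Pi.smul_apply, smul_eq_mul]
      ring
    · intro k
      have h := ((hprod t htI _ (hst k) i k)).const_mul (p k)
      refine h.congr (Filter.Eventually.of_forall fun ω => ?_)
      simp [Pi.smul_apply, smul_eq_mul]
      ring
  rw [hLHS]
  funext k
  rw [Finset.sum_apply]
  have hRHS : ∀ j : Fin n,
      ((p j • matKronRow (Matrix.single j i (1 : ℝ) * matExp (d j • Pi.transpose))
          (basisVec j)).mulVec
        (∫ ω, vecKron (η (t - d j) ω) (x (t - d j) ω) ∂μ)) k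
      = (if k = j then p j * ∑ a : Fin n, matExp (d j • Pi.transpose) i a *
          ∫ ω, η (t - d j) ω a * x (t - d j) ω j ∂μ else 0) := by
    intro j
    rw [hζ j]
    show (∑ q : Fin n × Fin n,
        (p j • matKronRow (Matrix.single j i (1 : ℝ) * matExp (d j • Pi.transpose))
          (basisVec j)) k q *
        ∫ ω, η (t - d j) ω q.1 * x (t - d j) ω q.2 ∂μ) = _
    rw [Fintype.sum_prod_type]
    simp only [Matrix.smul_apply, matKronRow, Matrix.of_apply, basisVec, smul_eq_mul]
    by_cases hkj : k = j
    · subst hkj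
      rw [if_pos rfl, Finset.mul_sum]
      refine Finset.sum_congr rfl fun a _ => ?_
      rw [Finset.sum_eq_single k]
      · simp only [Matrix.single_mul_apply_same, if_pos rfl, one_mul, mul_one]
        simp
        ring
      · intro b _ hb
        simp [hb]
      · simp
    · rw [if_neg hkj]
      refine Finset.sum_eq_zero fun a _ => Finset.sum_eq_zero fun b _ => ?_
      rw [Matrix.single_mul_apply_of_ne (h := hkj)]
      ring
  rw [Finset.sum_congr rfl (fun j _ => hRHS j), Finset.sum_ite_eq Finset.univ k
    (fun j => p j * ∑ a : Fin n, matExp (d j • Pi.transpose) i a *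
      ∫ ω, η (t - d j) ω a * x (t - d j) ω j ∂μ), if_pos (Finset.mem_univ k), key k]
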